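/- Let A and B be expansive d×d real matrices and ε = ln|det(A)|/ln|det(B)|. If sup over k ∈ ℤ of ‖A^{-k} B^{⌊εk⌋}‖ is finite, then sup over k ∈ ℤ of ‖B^{-⌊εk⌋} A^{k}‖ is also finite. -/

import Mathlib

open Matrix

noncomputable def opNorm {n : Type*} [Fintype n] [DecidableEq n] (A : Matrix n n ℝ) : ℝ :=
  ‖Matrix.toEuclideanCLM (𝕜 := ℝ) (n := n) A‖

def Expansive {n : Type*} [Fintype n] [DecidableEq n] (A : Matrix n n ℝ) : Prop :=
  IsUnit A ∧ ∀ μ ∈ spectrum ℂ (A.map Complex.ofReal), 1 < ‖μ‖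

noncomputable def eps {d : ℕ} (A B : Matrix (Fin d) (Fin d) ℝ) : ℝ :=
  Real.log |A.det| / Real.log |B.det|

lemma one_lt_multiset_prod (s : Multiset ℝ) (hs : s ≠ 0) (h : ∀ x ∈ s, 1 < x) :
    1 < s.prod := by
  induction s using Multiset.induction with
  | empty => simp at hs
  | cons a t ih =>
    rw [Multiset.prod_cons]
    rcases eq_or_ne t 0 with rfl | ht
    · simpa using h a (by simp)
    · have h1 : 1 < a := h a (by simp)
      have h2 : 1 < t.prod := ih ht (fun x hx => h x (by simp [hx]))
      nlinarith

open Polynomial in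
lemma root_mem_spectrum {d : ℕ} (M : Matrix (Fin d) (Fin d) ℂ) {μ : ℂ}
    (hμ : μ ∈ M.charpoly.roots) : μ ∈ spectrum ℂ M := by
  have hroot : M.charpoly.IsRoot μ := isRoot_of_mem_roots hμ
  rw [spectrum.mem_iff, Matrix.isUnit_iff_isUnit_det]
  have hdet : (algebraMap ℂ (Matrix (Fin d) (Fin d) ℂ) μ - M).det = M.charpoly.eval μ := by
    rw [Matrix.charpoly, _root_.eval_det, matPolyEquiv_charmatrix]
    simp only [eval_sub, eval_X, eval_C]
    congr 1
  rw [hdet, hroot.eq_zero]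
  simp

lemma one_lt_abs_det {d : ℕ} (hd : 0 < d) (A : Matrix (Fin d) (Fin d) ℝ)
    (hA : Expansive A) : 1 < |A.det| := by
  set Ac : Matrix (Fin d) (Fin d) ℂ := A.map Complex.ofReal with hAc
  have h1 : (Complex.ofRealHom A.det : ℂ) = Ac.det := RingHom.map_det Complex.ofRealHom A
  have h2 : Ac.det = Ac.charpoly.roots.prod := Matrix.det_eq_prod_roots_charpoly Ac
  have hcard : Ac.charpoly.roots.card = d := by
    rw [(Polynomial.splits_iff_card_roots).mp (IsAlgClosed.splits Ac.charpoly),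
      Matrix.charpoly_natDegree_eq_dim, Fintype.card_fin]
  obtain ⟨μ, hμ⟩ : ∃ μ, μ ∈ Ac.charpoly.roots := by
    apply Multiset.exists_mem_of_ne_zero
    intro h0
    rw [h0] at hcard
    simp at hcard
    omega
  have habs : |A.det| = (Ac.charpoly.roots.map (fun z : ℂ => ‖z‖)).prod := by
    have : ‖Ac.det‖ = (Ac.charpoly.roots.map (fun z : ℂ => ‖z‖)).prod := by
      rw [h2]
      exact map_multiset_prod (normHom (α := ℂ)) _
    rw [← this, ← h1]
    simp
  rw [habs]
  apply one_lt_multiset_prod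
  · intro h0
    have := Multiset.mem_map_of_mem (fun z : ℂ => ‖z‖) hμ
    rw [h0] at this
    simp at this
  · intro x hx
    obtain ⟨r, hr, rfl⟩ := Multiset.mem_map.mp hx
    exact hA.2 r (root_mem_spectrum Ac hr)

lemma abs_zpow_real (x : ℝ) (n : ℤ) : |x ^ n| = |x| ^ n := by
  cases n with
  | ofNat m => simp [abs_pow]
  | negSucc m => simp [zpow_negSucc, abs_inv, abs_pow]

lemma det_zpow_real {d : ℕ} (A : Matrix (Fin d) (Fin d) ℝ) (n : ℤ) :
    (A ^ n).det = A.det ^ n := by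
  cases n with
  | ofNat m => simp [Matrix.det_pow]
  | negSucc m =>
      rw [zpow_negSucc, Matrix.det_nonsing_inv, Ring.inverse_eq_inv', Matrix.det_pow,
        zpow_negSucc]

lemma clm_det {d : ℕ} (X : Matrix (Fin d) (Fin d) ℝ) :
    (Matrix.toEuclideanCLM (𝕜 := ℝ) (n := Fin d) X).det = X.det := by
  rw [ContinuousLinearMap.det, Matrix.coe_toEuclideanCLM_eq_toEuclideanLin,
    Matrix.toEuclideanLin_eq_toLin]
  exact LinearMap.det_toLin _ X

set_option maxHeartbeats 1000000 in
set_option synthInstance.maxHeartbeats 400000 in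
/-- If ‖A^{-k} B^{⌊εk⌋}‖ is uniformly bounded over k ∈ ℤ, so is ‖B^{-⌊εk⌋} A^{k}‖. -/
theorem sup_swap_bound {d : ℕ} (A B : Matrix (Fin d) (Fin d) ℝ)
    (hA : Expansive A) (hB : Expansive B)
    (h : ∃ M : ℝ, ∀ k : ℤ, opNorm (A ^ (-k) * B ^ ⌊eps A B * k⌋) ≤ M) :
    ∃ M : ℝ, ∀ k : ℤ, opNorm (B ^ (-⌊eps A B * k⌋) * A ^ k) ≤ M := by
  rcases Nat.eq_zero_or_pos d with hd | hd
  · subst hd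
    refine ⟨0, fun k => ?_⟩
    refine ContinuousLinearMap.opNorm_le_bound _ le_rfl fun x => ?_
    have hx : x = 0 := Subsingleton.elim x 0
    simp [hx]
  obtain ⟨M, hM⟩ := h
  have ha : 1 < |A.det| := one_lt_abs_det hd A hA
  have hb : 1 < |B.det| := one_lt_abs_det hd B hB
  have hAd : IsUnit A.det := (Matrix.isUnit_iff_isUnit_det A).mp hA.1
  have hBd : IsUnit B.det := (Matrix.isUnit_iff_isUnit_det B).mp hB.1
  set φ := Matrix.toEuclideanCLM (𝕜 := ℝ) (n := Fin d) with hφ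
  set ε := eps A B with hε
  -- lower bound on the determinant
  have hlow : ∀ k : ℤ, |B.det|⁻¹ ≤ |(A ^ (-k) * B ^ ⌊ε * k⌋).det| := by
    intro k
    have hb0 : (0 : ℝ) < |B.det| := lt_trans one_pos hb
    have ha0 : (0 : ℝ) < |A.det| := lt_trans one_pos ha
    have hlogb : 0 < Real.log |B.det| := Real.log_pos hb
    rw [Matrix.det_mul, abs_mul, det_zpow_real, det_zpow_real, abs_zpow_real, abs_zpow_real]
    rw [← Real.log_le_log_iff (by positivity) (by positivity), Real.log_mul
      (by positivity) (by positivity), Real.log_zpow, Real.log_zpow, Real.log_inv]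
    have hfloor : ε * k - 1 < (⌊ε * k⌋ : ℝ) := Int.sub_one_lt_floor _
    have hlogbne : Real.log |B.det| ≠ 0 := ne_of_gt hlogb
    have hεk : ε * k * Real.log |B.det| = k * Real.log |A.det| := by
      rw [hε]; unfold eps
      rw [div_mul_eq_mul_div, div_mul_cancel₀ _ hlogbne]
      ring
    push_cast
    nlinarith [hfloor, hlogb, mul_lt_mul_of_pos_right hfloor hlogb]
  -- the compact set
  set c := |B.det|⁻¹ with hc
  set K : Set (EuclideanSpace ℝ (Fin d) →L[ℝ] EuclideanSpace ℝ (Fin d)) :=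
    {T | ‖T‖ ≤ M ∧ c ≤ |T.det|} with hK
  have hKclosed : IsClosed K := by
    apply IsClosed.inter
    · exact isClosed_le continuous_norm continuous_const
    · exact isClosed_le continuous_const (continuous_abs.comp
        ContinuousLinearMap.continuous_det)
  have hKcompact : IsCompact K := by
    refine (isCompact_closedBall (0 : EuclideanSpace ℝ (Fin d) →L[ℝ]
      EuclideanSpace ℝ (Fin d)) M).of_isClosed_subset hKclosed ?_
    intro T hT
    simpa [Metric.mem_closedBall, dist_zero_right] using hT.1
  have hcont : ContinuousOn (fun T : EuclideanSpace ℝ (Fin d) →L[ℝ]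
      EuclideanSpace ℝ (Fin d) => ‖Ring.inverse T‖) K := by
    intro T hT
    have hTu : IsUnit T := by
      have hdet : T.det ≠ 0 := by
        intro h0
        have := hT.2
        rw [h0] at this
        simp only [abs_zero] at this
        have : (0:ℝ) < c := by rw [hc]; positivity
        linarith
      have hX : IsUnit (φ.symm T) := by
        rw [Matrix.isUnit_iff_isUnit_det]
        rw [isUnit_iff_ne_zero]
        intro h0
        apply hdet
        rw [← clm_det (φ.symm T)] at h0
        simpa [hφ, StarAlgEquiv.apply_symm_apply] using h0
      have := hX.map φ
      simpa using this
    exact ((NormedRing.inverse_continuousAt hTu.unit).continuousWithinAt).norm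
  have hbdd : BddAbove ((fun T => ‖Ring.inverse T‖) '' K) :=
    hKcompact.bddAbove_image hcont
  obtain ⟨M', hM'⟩ := hbdd
  refine ⟨M', fun k => ?_⟩
  set j := ⌊ε * k⌋ with hj
  set X := A ^ (-k) * B ^ j with hX
  have hXu : IsUnit X := by
    rw [Matrix.isUnit_iff_isUnit_det, Matrix.det_mul]
    exact (hAd.det_zpow (-k)).mul (hBd.det_zpow j)
  have hTK : φ X ∈ K := by
    constructor
    · exact hM k
    · rw [hφ, clm_det]
      exact hlow k
  -- identify the target with the inverse
  have hinv : X⁻¹ = B ^ (-j) * A ^ k := by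
    rw [hX, Matrix.mul_inv_rev, ← Matrix.zpow_neg hBd, Matrix.zpow_neg hAd,
      Matrix.nonsing_inv_nonsing_inv _ (hAd.det_zpow k)]
  have hring : Ring.inverse (φ X) = φ X⁻¹ := by
    have h1 : φ X⁻¹ * φ X = 1 := by
      rw [← _root_.map_mul, Matrix.nonsing_inv_mul X ((Matrix.isUnit_iff_isUnit_det X).mp hXu),
        _root_.map_one]
    have h2 : φ X * φ X⁻¹ = 1 := by
      rw [← _root_.map_mul, Matrix.mul_nonsing_inv X ((Matrix.isUnit_iff_isUnit_det X).mp hXu),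
        _root_.map_one]
    let w : (EuclideanSpace ℝ (Fin d) →L[ℝ] EuclideanSpace ℝ (Fin d))ˣ := ⟨φ X, φ X⁻¹, h2, h1⟩
    exact Ring.inverse_unit w
  have : opNorm (B ^ (-j) * A ^ k) = ‖Ring.inverse (φ X)‖ := by
    rw [hring, ← hinv]
    rfl
  rw [this]
  exact hM' ⟨φ X, hTK, rfl⟩
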